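/- Under Foata's fundamental transformation mapping π to σ, a non-minimal fixed point of π (a fixed point i with i ≠ 1) corresponds to a pair of consecutive positions in σ that are both left-to-right minima; and the fixed point 1 (if present) corresponds to σ ending in the value 1 at its last position. -/

import Mathlib

open Classical in
/-- The one-line word of Foata's fundamental transformation: write each cycle of `π`
with its smallest element first, sort the cycles in descending order of their first
elements, and erase the parentheses. -/
noncomputable def foataWord {n : ℕ} (π : Equiv.Perm (Fin n)) : List (Fin n) :=
  (((List.finRange n).filter (fun m => decide (∀ k : ℕ, m ≤ (π ^ k) m))).reverse).flatMap
    (fun m => (List.range (Function.minimalPeriod (⇑π) m)).map (fun k => (π ^ k) m))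

/-- Foata's fundamental transformation as a map on permutations. -/
noncomputable def foataPerm {n : ℕ} (π : Equiv.Perm (Fin n)) : Equiv.Perm (Fin n) :=
  if h : ∃ σ : Equiv.Perm (Fin n), List.ofFn ⇑σ = foataWord π then h.choose else 1

namespace FoataAux

variable {n : ℕ} (π : Equiv.Perm (Fin n))

open Classical in
noncomputable def mins : List (Fin n) :=
  (List.finRange n).filter (fun m => decide (∀ k : ℕ, m ≤ (π ^ k) m))

noncomputable def block (m : Fin n) : List (Fin n) :=
  (List.range (Function.minimalPeriod (⇑π) m)).map (fun k => (π ^ k) m)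

theorem foataWord_eq : foataWord π = (mins π).reverse.flatMap (block π) := rfl

variable {π}

open Classical in
theorem mem_mins {m : Fin n} : m ∈ mins π ↔ ∀ k : ℕ, m ≤ (π ^ k) m := by
  simp [mins, List.mem_filter, List.mem_finRange]

theorem minimalPeriod_pos (m : Fin n) : 0 < Function.minimalPeriod (⇑π) m := by
  apply Function.IsPeriodicPt.minimalPeriod_pos (orderOf_pos π)
  show (⇑π)^[orderOf π] m = m
  rw [Equiv.Perm.iterate_eq_pow, pow_orderOf_eq_one]; rfl

theorem mem_block {m x : Fin n} :
    x ∈ block π m ↔ ∃ k < Function.minimalPeriod (⇑π) m, (π ^ k) m = x := by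
  simp [block]

theorem sameCycle_of_mem_block {m x : Fin n} (hx : x ∈ block π m) : π.SameCycle m x := by
  obtain ⟨k, -, hk⟩ := mem_block.1 hx
  exact ⟨(k : ℤ), by simpa using hk⟩

theorem min_le_of_mem_block {m x : Fin n} (hm : m ∈ mins π) (hx : x ∈ block π m) : m ≤ x := by
  obtain ⟨k, -, hk⟩ := mem_block.1 hx
  exact hk ▸ (mem_mins.1 hm) k

theorem min_le_of_sameCycle {m x : Fin n} (hm : m ∈ mins π) (hx : π.SameCycle m x) : m ≤ x := by
  obtain ⟨k, -, hk⟩ := hx.exists_pow_eq'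
  exact hk ▸ (mem_mins.1 hm) k

theorem mem_block_of_sameCycle {m x : Fin n} (hx : π.SameCycle m x) : x ∈ block π m := by
  obtain ⟨k, -, hk⟩ := hx.exists_pow_eq'
  refine mem_block.2 ⟨k % Function.minimalPeriod (⇑π) m,
    Nat.mod_lt _ (minimalPeriod_pos m), ?_⟩
  show (⇑π)^[k % Function.minimalPeriod (⇑π) m] m = x
  rw [Function.iterate_mod_minimalPeriod_eq]
  exact hk

theorem block_nodup (m : Fin n) : (block π m).Nodup := by
  refine List.Nodup.map_on ?_ List.nodup_range
  intro a ha b hb hab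
  exact Function.iterate_injOn_Iio_minimalPeriod (by simpa using ha) (by simpa using hb) hab

theorem mins_nodup : (mins π).Nodup := (List.nodup_finRange n).filter _

theorem mins_pairwise : (mins π).Pairwise (· < ·) :=
  (List.pairwise_lt_finRange n).filter _

theorem blocks_disjoint {a b : Fin n} (ha : a ∈ mins π) (hb : b ∈ mins π) (hab : a ≠ b) :
    ∀ x, x ∈ block π a → x ∈ block π b → False := by
  intro x hxa hxb
  have h1 : π.SameCycle a b := (sameCycle_of_mem_block hxa).trans (sameCycle_of_mem_block hxb).symm
  exact hab (le_antisymm (min_le_of_sameCycle ha h1) (min_le_of_sameCycle hb h1.symm))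

theorem foataWord_nodup : (foataWord π).Nodup := by
  rw [foataWord_eq, List.nodup_flatMap]
  constructor
  · exact fun x _ => block_nodup x
  · refine List.Pairwise.imp_of_mem ?_ (List.pairwise_reverse.2 ((mins_nodup (π := π)).imp Ne.symm))
    intro a b ha hb hab
    simp only [List.mem_reverse] at ha hb
    exact fun x hx hx' => blocks_disjoint ha hb hab x hx hx'

theorem mem_foataWord (x : Fin n) : x ∈ foataWord π := by
  classical
  set S : Finset (Fin n) := Finset.univ.filter (fun y => π.SameCycle y x) with hS
  have hxS : x ∈ S := by simp [hS, Equiv.Perm.SameCycle.refl]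
  have hne : S.Nonempty := ⟨x, hxS⟩
  set m := S.min' hne with hm
  have hmS : m ∈ S := S.min'_mem hne
  have hmx : π.SameCycle m x := by simpa [hS] using hmS
  have hmmins : m ∈ mins π := by
    rw [mem_mins]
    intro k
    have h1 : π.SameCycle m ((π ^ k) m) := ⟨(k : ℤ), by simp⟩
    have : (π ^ k) m ∈ S := by
      simp only [hS, Finset.mem_filter, Finset.mem_univ, true_and]
      exact h1.symm.trans hmx
    exact S.min'_le _ this
  rw [foataWord_eq, List.mem_flatMap]
  exact ⟨m, by simpa using hmmins, mem_block_of_sameCycle hmx⟩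

end FoataAux

namespace FoataAux

variable {n : ℕ} {π : Equiv.Perm (Fin n)}

theorem foataWord_length : (foataWord π).length = n := by
  have h1 : (foataWord π).toFinset = Finset.univ := by
    ext x; simp [mem_foataWord]
  have h2 := List.toFinset_card_of_nodup (foataWord_nodup (π := π))
  rw [h1, Finset.card_univ, Fintype.card_fin] at h2
  omega

theorem exists_perm : ∃ σ : Equiv.Perm (Fin n), List.ofFn ⇑σ = foataWord π := by
  have hl : (foataWord π).length = n := foataWord_length
  set f : Fin n → Fin n := fun j => (foataWord π).get (Fin.cast hl.symm j) with hf
  have hinj : Function.Injective f := by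
    intro a b hab
    have := List.nodup_iff_injective_get.1 foataWord_nodup hab
    simpa [Fin.ext_iff] using this
  have hbij := Finite.injective_iff_bijective.1 hinj
  refine ⟨Equiv.ofBijective f hbij, ?_⟩
  apply List.ext_getElem (by simp [hl])
  intro k h1 h2
  simp only [List.getElem_ofFn, Equiv.ofBijective_apply, hf]
  simp [List.get_eq_getElem]

theorem ofFn_foataPerm : List.ofFn ⇑(foataPerm π) = foataWord π := by
  rw [foataPerm, dif_pos exists_perm]
  exact exists_perm.choose_spec

theorem foataPerm_apply (j : Fin n) :
    foataPerm π j = (foataWord π)[(j : ℕ)]'(by rw [foataWord_length]; exact j.isLt) := by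
  have h := ofFn_foataPerm (π := π)
  have : (List.ofFn ⇑(foataPerm π))[(j : ℕ)]'(by simpa using j.isLt)
      = (foataWord π)[(j : ℕ)]'(by rw [foataWord_length]; exact j.isLt) := by
    simp_rw [h]
  simpa using this

end FoataAux

namespace FoataAux

variable {n : ℕ} {π : Equiv.Perm (Fin n)}

theorem fixedPt_mem_mins {i : Fin n} (hi : π i = i) : i ∈ mins π := by
  rw [mem_mins]
  intro k
  have h1 : (π ^ k) i = i := Function.IsFixedPt.iterate hi k
  rw [h1]

theorem block_fixedPt {i : Fin n} (hi : π i = i) : block π i = [i] := by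
  have h1 : Function.minimalPeriod (⇑π) i = 1 :=
    Function.minimalPeriod_eq_one_iff_isFixedPt.2 hi
  simp [block, h1, List.range_succ]

theorem split_mins {i : Fin n} (hi : i ∈ mins π) :
    ∃ A C : List (Fin n), (mins π).reverse = A ++ i :: C ∧
      (∀ a ∈ A, i < a) ∧ (∀ c ∈ C, c < i) := by
  obtain ⟨A, C, hAC⟩ := List.append_of_mem (List.mem_reverse.2 hi)
  have hp : ((mins π).reverse).Pairwise (fun a b => b < a) := by
    rw [List.pairwise_reverse]; exact mins_pairwise
  rw [hAC, List.pairwise_append] at hp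
  obtain ⟨-, hC, hmix⟩ := hp
  refine ⟨A, C, hAC, ?_, ?_⟩
  · intro a ha; exact hmix a ha i List.mem_cons_self
  · intro c hc; exact (List.pairwise_cons.1 hC).1 c hc

theorem elem_gt_of_mem_flatMap {A : List (Fin n)} (hA : ∀ a ∈ A, a ∈ mins π)
    {i x : Fin n} (hgt : ∀ a ∈ A, i < a) (hx : x ∈ A.flatMap (block π)) : i < x := by
  obtain ⟨a, ha, hxa⟩ := List.mem_flatMap.1 hx
  exact lt_of_lt_of_le (hgt a ha) (min_le_of_mem_block (hA a ha) hxa)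

end FoataAux


open FoataAux

/-- Under Foata's fundamental transformation `π ↦ σ`, a non-minimal fixed point `i` of
`π` corresponds to a pair of consecutive left-to-right minima of `σ` (the first one
carrying the value `i`), and the minimal fixed point (if present) corresponds to `σ`
ending with the minimal value. -/
theorem foata_fixed_points_correspondence {n : ℕ} (π σ : Equiv.Perm (Fin n))
    (h : σ = foataPerm π) :
    (∀ i : Fin n, π i = i → 0 < (i : ℕ) →
        ∃ j j' : Fin n, σ j = i ∧ (j' : ℕ) = (j : ℕ) + 1 ∧
          (∀ l, l < j → σ j < σ l) ∧ (∀ l, l < j' → σ j' < σ l)) ∧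
    ((∃ i : Fin n, (i : ℕ) = 0 ∧ π i = i) →
        ∃ j : Fin n, (j : ℕ) = n - 1 ∧ (σ j : ℕ) = 0) := by
  subst h
  constructor
  · intro i hfix hipos
    have hn : 0 < n := i.pos
    have hi : i ∈ mins π := fixedPt_mem_mins hfix
    obtain ⟨A, C, hAC, hAgt, hClt⟩ := split_mins hi
    have hAmem : ∀ a ∈ A, a ∈ mins π := by
      intro a ha
      have h5 : a ∈ (mins π).reverse := by rw [hAC]; simp [ha]
      simpa using h5
    set z : Fin n := ⟨0, hn⟩ with hz
    have hzmins : z ∈ mins π := by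
      rw [mem_mins]; intro k; rw [Fin.le_def]; simp [hz]
    have hzC : z ∈ C := by
      have h1 : z ∈ A ++ i :: C := by rw [← hAC]; simpa using hzmins
      rcases List.mem_append.1 h1 with h2 | h2
      · exfalso
        have h6 := hAgt z h2
        rw [Fin.lt_def] at h6
        simp [hz] at h6
      · rcases List.mem_cons.1 h2 with h3 | h3
        · exfalso
          have h7 := congrArg Fin.val h3
          simp [hz] at h7
          omega
        · exact h3
    obtain ⟨c, C', rfl⟩ : ∃ c C', C = c :: C' := by
      cases C with
      | nil => exact absurd hzC List.not_mem_nil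
      | cons c C' => exact ⟨c, C', rfl⟩
    set P := A.flatMap (block π) with hP
    set Q := (c :: C').flatMap (block π) with hQ
    have hL : foataWord π = P ++ i :: Q := by
      rw [foataWord_eq, hAC, List.flatMap_append, List.flatMap_cons, block_fixedPt hfix]
      rfl
    have hlen : P.length + 1 + Q.length = n := by
      have h8 := foataWord_length (π := π)
      rw [hL] at h8; simp at h8; omega
    have hQpos : 0 < Q.length := by
      rw [hQ, List.flatMap_cons, List.length_append]
      have h9 : 0 < (block π c).length := by
        simp [block]; exact minimalPeriod_pos c
      omega
    have hci : c < i := hClt c List.mem_cons_self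
    have hQ0 : Q[0]'hQpos = c := by
      have e : Q = block π c ++ C'.flatMap (block π) := by rw [hQ, List.flatMap_cons]
      rw [List.getElem_of_eq e,
        List.getElem_append_left (by simpa [block] using minimalPeriod_pos c)]
      simp [block, minimalPeriod_pos c]
    -- value of the word at any index, transported along hL
    have key : ∀ (m : ℕ) (hm : m < n),
        foataPerm π ⟨m, hm⟩ = (P ++ i :: Q)[m]'(by simp; omega) := by
      intro m hm
      rw [foataPerm_apply]
      exact List.getElem_of_eq hL _
    refine ⟨⟨P.length, by omega⟩, ⟨P.length + 1, by omega⟩, ?_, rfl, ?_, ?_⟩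
    · rw [key]
      rw [List.getElem_append_right (le_refl _)]
      simp
    · intro l hl
      rw [Fin.lt_def] at hl; simp only at hl
      have hl' : (l : ℕ) < P.length := hl
      have hLl := key (l : ℕ) l.isLt
      rw [Fin.eta] at hLl
      rw [hLl, List.getElem_append_left hl']
      rw [key, List.getElem_append_right (le_refl _)]
      simp only [Nat.sub_self, List.getElem_cons_zero]
      exact elem_gt_of_mem_flatMap hAmem hAgt (List.getElem_mem _)
    · intro l hl
      rw [Fin.lt_def] at hl; simp only at hl
      have hLl := key (l : ℕ) l.isLt
      rw [Fin.eta] at hLl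
      rw [hLl, key, List.getElem_append_right (by omega)]
      simp only [Nat.add_sub_cancel_left, List.getElem_cons_succ]
      rw [hQ0]
      rcases Nat.lt_or_ge (l : ℕ) P.length with h2 | h2
      · rw [List.getElem_append_left h2]
        exact lt_trans hci (elem_gt_of_mem_flatMap hAmem hAgt (List.getElem_mem _))
      · have h3 : (l : ℕ) = P.length := by omega
        rw [List.getElem_append_right (by omega)]
        simp only [h3, Nat.sub_self, List.getElem_cons_zero]
        exact hci
  · rintro ⟨i, hival, hfix⟩
    have hn : 0 < n := i.pos
    have hi : i ∈ mins π := fixedPt_mem_mins hfix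
    obtain ⟨A, C, hAC, hAgt, hClt⟩ := split_mins hi
    have hCnil : C = [] := by
      cases C with
      | nil => rfl
      | cons c C' =>
        exfalso
        have h6 := hClt c List.mem_cons_self
        rw [Fin.lt_def, hival] at h6
        omega
    subst hCnil
    set P := A.flatMap (block π) with hP
    have hL : foataWord π = P ++ [i] := by
      rw [foataWord_eq, hAC, List.flatMap_append, List.flatMap_cons, block_fixedPt hfix]
      rfl
    have hlen : P.length + 1 = n := by
      have h8 := foataWord_length (π := π)
      rw [hL] at h8; simp at h8; omega
    refine ⟨⟨n - 1, by omega⟩, rfl, ?_⟩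
    rw [foataPerm_apply]
    have h11 := List.getElem_of_eq hL (show (n - 1 : ℕ) < (foataWord π).length by
      rw [foataWord_length]; omega)
    rw [h11, List.getElem_append_right (by omega)]
    simp [hival]
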